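/- For every ε with 0 < ε < 1/3, there exists N such that for all n ≥ N, the probability that a random balanced game G(n,n) is strict-dominance solvable satisfies π(n,n) ≤ n^{−(1/3−ε)·n}. -/

import Mathlib

open Finset Filter

noncomputable section

/-- Row action `i` is strictly dominated in the restricted game with Row actions `X`
and Column actions `Y`, for Row payoff matrix `R`. -/
def RowDomIn {m n : ℕ} (R : Fin m → Fin n → ℝ) (X : Finset (Fin m)) (Y : Finset (Fin n))
    (i : Fin m) : Prop :=
  ∃ i' ∈ X, ∀ j ∈ Y, R i j < R i' j

/-- Column action `j` is strictly dominated in the restricted game with Row actions `X`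
and Column actions `Y`, for Column payoff matrix `C`. -/
def ColDomIn {m n : ℕ} (C : Fin m → Fin n → ℝ) (X : Finset (Fin m)) (Y : Finset (Fin n))
    (j : Fin n) : Prop :=
  ∃ j' ∈ Y, ∀ i ∈ X, C i j < C i j'

open Classical in
/-- One round of iterated elimination: simultaneously delete every strictly dominated
action of both players in the current restricted game. -/
def elimStep {m n : ℕ} (R C : Fin m → Fin n → ℝ)
    (p : Finset (Fin m) × Finset (Fin n)) : Finset (Fin m) × Finset (Fin n) :=
  (p.1.filter fun i => ¬ RowDomIn R p.1 p.2 i,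
   p.2.filter fun j => ¬ ColDomIn C p.1 p.2 j)

/-- Surviving actions of the subgame `(p.1, p.2)` after iterated elimination of strictly
dominated actions (iterating `m + n` times surely reaches the fixed point). -/
def survivorsFrom {m n : ℕ} (R C : Fin m → Fin n → ℝ)
    (p : Finset (Fin m) × Finset (Fin n)) : Finset (Fin m) × Finset (Fin n) :=
  (elimStep R C)^[m + n] p

/-- The subgame `(p.1, p.2)` is strict-dominance solvable: exactly one action of each
player survives iterated elimination of strictly dominated actions. -/
def SolvableFrom {m n : ℕ} (R C : Fin m → Fin n → ℝ)
    (p : Finset (Fin m) × Finset (Fin n)) : Prop :=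
  (survivorsFrom R C p).1.card = 1 ∧ (survivorsFrom R C p).2.card = 1

/-- Surviving actions of the full game after iterated elimination. -/
def survivors {m n : ℕ} (R C : Fin m → Fin n → ℝ) : Finset (Fin m) × Finset (Fin n) :=
  survivorsFrom R C (Finset.univ, Finset.univ)

/-- The game is strict-dominance solvable. -/
def Solvable {m n : ℕ} (R C : Fin m → Fin n → ℝ) : Prop :=
  SolvableFrom R C (Finset.univ, Finset.univ)

/-- The number of rounds performed by the iterated elimination procedure:
the least `k` such that round `k + 1` deletes nothing more. -/
def elimRounds {m n : ℕ} (R C : Fin m → Fin n → ℝ) : ℕ :=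
  sInf {k | (elimStep R C)^[k + 1] (Finset.univ, Finset.univ)
          = (elimStep R C)^[k] (Finset.univ, Finset.univ)}

/-- Sample space of the random game `G(m,n)`: for each Column action an i.i.d. uniform
permutation giving Row's ordinal payoffs in that column, and for each Row action an
i.i.d. uniform permutation giving Column's ordinal payoffs in that row. -/
abbrev Omega (m n : ℕ) := (Fin n → Equiv.Perm (Fin m)) × (Fin m → Equiv.Perm (Fin n))

/-- Row's payoff matrix of the realized game. -/
def RPay {m n : ℕ} (ω : Omega m n) : Fin m → Fin n → ℝ := fun i j => ((ω.1 j) i : ℕ)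

/-- Column's payoff matrix of the realized game. -/
def CPay {m n : ℕ} (ω : Omega m n) : Fin m → Fin n → ℝ := fun i j => ((ω.2 i) j : ℕ)

/-- Probability of an event under the uniform distribution on `Omega m n`
(i.e. all `m + n` permutations uniform and mutually independent). -/
def Pr {m n : ℕ} (E : Set (Omega m n)) : ℝ :=
  (E.toFinite.toFinset.card : ℝ) / (Fintype.card (Omega m n) : ℝ)

open Classical in
/-- Number of Row actions that are not strictly dominated. -/
def UR {m n : ℕ} (ω : Omega m n) : ℕ :=
  (Finset.univ.filter fun i => ¬ RowDomIn (RPay ω) Finset.univ Finset.univ i).card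

open Classical in
/-- Number of Column actions that are not strictly dominated. -/
def UC {m n : ℕ} (ω : Omega m n) : ℕ :=
  (Finset.univ.filter fun j => ¬ ColDomIn (CPay ω) Finset.univ Finset.univ j).card

/-- Number of Row actions surviving iterated elimination. -/
def SR {m n : ℕ} (ω : Omega m n) : ℕ := (survivors (RPay ω) (CPay ω)).1.card

/-- Number of Column actions surviving iterated elimination. -/
def SC {m n : ℕ} (ω : Omega m n) : ℕ := (survivors (RPay ω) (CPay ω)).2.card

/-- The realized game is strict-dominance solvable. -/
def GameSolvable {m n : ℕ} (ω : Omega m n) : Prop := Solvable (RPay ω) (CPay ω)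

/-- Number of rounds of the iterated elimination procedure in the realized game. -/
def GameRounds {m n : ℕ} (ω : Omega m n) : ℕ := elimRounds (RPay ω) (CPay ω)

/-- `π(m,n)`: probability that the random game `G(m,n)` is strict-dominance solvable. -/
def probSolvable (m n : ℕ) : ℝ := Pr {ω : Omega m n | GameSolvable ω}

/-- Expected number of Column's strictly undominated actions, `E[U^C(m,n)]`. -/
def expUC (m n : ℕ) : ℝ :=
  (∑ ω : Omega m n, (UC ω : ℝ)) / (Fintype.card (Omega m n) : ℝ)

/-- Expected number of Column actions surviving iterated elimination, `E[S^C(m,n)]`. -/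
def expSC (m n : ℕ) : ℝ :=
  (∑ ω : Omega m n, (SC ω : ℝ)) / (Fintype.card (Omega m n) : ℝ)

open Classical in
/-- `E[I(m,n)]`: expected number of elimination rounds conditional on the game being
strict-dominance solvable. -/
def condExpRounds (m n : ℕ) : ℝ :=
  (∑ ω : Omega m n, if GameSolvable ω then (GameRounds ω : ℝ) else 0) /
    (∑ ω : Omega m n, if GameSolvable ω then (1 : ℝ) else 0)

/-- Unsigned Stirling numbers of the first kind. -/
def stirling1 : ℕ → ℕ → ℕ
  | 0, 0 => 1
  | 0, _ + 1 => 0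
  | _ + 1, 0 => 0
  | n + 1, k + 1 => n * stirling1 n (k + 1) + stirling1 n k

end

section AUXSECT
noncomputable section

open Finset


section cert

variable {m n : ℕ} (R C : Fin m → Fin n → ℝ)

/-- iterates -/
def pIter (t : ℕ) : Finset (Fin m) × Finset (Fin n) :=
  (elimStep R C)^[t] (Finset.univ, Finset.univ)

lemma pIter_succ (t : ℕ) : pIter R C (t+1) = elimStep R C (pIter R C t) := by
  simp [pIter, Function.iterate_succ_apply']

lemma pIter_antitone₁ {t u : ℕ} (h : t ≤ u) : (pIter R C u).1 ⊆ (pIter R C t).1 := by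
  classical
  induction u with
  | zero => simp_all
  | succ u ih =>
    rcases Nat.lt_or_ge t (u+1) with h' | h'
    · refine Finset.Subset.trans ?_ (ih (by omega))
      rw [pIter_succ]; exact Finset.filter_subset _ _
    · have : t = u + 1 := by omega
      subst this; exact Finset.Subset.refl _

lemma pIter_antitone₂ {t u : ℕ} (h : t ≤ u) : (pIter R C u).2 ⊆ (pIter R C t).2 := by
  classical
  induction u with
  | zero => simp_all
  | succ u ih =>
    rcases Nat.lt_or_ge t (u+1) with h' | h'
    · refine Finset.Subset.trans ?_ (ih (by omega))
      rw [pIter_succ]; exact Finset.filter_subset _ _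
    · have : t = u + 1 := by omega
      subst this; exact Finset.Subset.refl _

lemma row_dom_of_elim {t : ℕ} {i : Fin m} (hi : i ∈ (pIter R C t).1)
    (hni : i ∉ (pIter R C (t+1)).1) :
    ∃ i' ∈ (pIter R C t).1, ∀ j ∈ (pIter R C t).2, R i j < R i' j := by
  rw [pIter_succ] at hni
  by_contra hcon
  push_neg at hcon
  apply hni
  classical
  simp only [elimStep, Finset.mem_filter]
  refine ⟨hi, ?_⟩
  rintro ⟨i', hi', hd⟩
  obtain ⟨j, hj, hle⟩ := hcon i' hi'
  exact absurd (hd j hj) (not_lt.mpr hle)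

lemma col_dom_of_elim {t : ℕ} {j : Fin n} (hj : j ∈ (pIter R C t).2)
    (hnj : j ∉ (pIter R C (t+1)).2) :
    ∃ j' ∈ (pIter R C t).2, ∀ i ∈ (pIter R C t).1, C i j < C i j' := by
  rw [pIter_succ] at hnj
  by_contra hcon
  push_neg at hcon
  apply hnj
  classical
  simp only [elimStep, Finset.mem_filter]
  refine ⟨hj, ?_⟩
  rintro ⟨j', hj', hd⟩
  obtain ⟨i, hi, hle⟩ := hcon j' hj'
  exact absurd (hd i hi) (not_lt.mpr hle)

end cert

/-- Generic escape lemma. -/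
lemma escape {I J : Type*} [Fintype I] [DecidableEq I] (V : I → J → ℝ)
    (X : ℕ → Finset I) (W : Finset J) (T : ℕ) (hX0 : X 0 = Finset.univ)
    (hW : W.Nonempty)
    (hdom : ∀ t, t < T → ∀ i ∈ X t, i ∉ X (t+1) →
      ∃ i' ∈ X t, ∀ j ∈ W, V i j < V i' j) :
    ∀ i ∉ X T, ∃ i' ∈ X T, ∀ j ∈ W, V i j < V i' j := by
  classical
  obtain ⟨j₀, hj₀⟩ := hW
  have trans : ∀ (i : I), i ∉ X T → ∃ t, t < T ∧ i ∈ X t ∧ i ∉ X (t+1) := by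
    intro i hi
    have hi0 : i ∈ X 0 := by rw [hX0]; exact Finset.mem_univ i
    clear hdom
    induction T with
    | zero => exact absurd hi0 hi
    | succ T ih =>
      by_cases h : i ∈ X T
      · exact ⟨T, Nat.lt_succ_self T, h, hi⟩
      · obtain ⟨t, ht, h1, h2⟩ := ih h
        exact ⟨t, by omega, h1, h2⟩
  suffices H : ∀ b : ℕ, ∀ i, (Finset.univ.filter fun x => V i j₀ < V x j₀).card < b →
      i ∉ X T → ∃ i' ∈ X T, ∀ j ∈ W, V i j < V i' j by
    intro i hi
    exact H ((Finset.univ.filter fun x => V i j₀ < V x j₀).card + 1) i (Nat.lt_succ_self _) hi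
  intro b
  induction b with
  | zero => intro i h; omega
  | succ b ih =>
    intro i hcard hiT
    obtain ⟨t, htT, hit, hit1⟩ := trans i hiT
    obtain ⟨i', hi't, hdomi⟩ := hdom t htT i hit hit1
    by_cases h : i' ∈ X T
    · exact ⟨i', h, hdomi⟩
    · have hsub : (Finset.univ.filter fun x => V i' j₀ < V x j₀) ⊆
          (Finset.univ.filter fun x => V i j₀ < V x j₀) := by
        intro x hx
        simp only [Finset.mem_filter, Finset.mem_univ, true_and] at hx ⊢
        exact lt_trans (hdomi j₀ hj₀) hx
      have hmem : i' ∈ (Finset.univ.filter fun x => V i j₀ < V x j₀) := by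
        simp only [Finset.mem_filter, Finset.mem_univ, true_and]
        exact hdomi j₀ hj₀
      have hnotmem : i' ∉ (Finset.univ.filter fun x => V i' j₀ < V x j₀) := by
        simp
      have hlt : (Finset.univ.filter fun x => V i' j₀ < V x j₀).card <
          (Finset.univ.filter fun x => V i j₀ < V x j₀).card :=
        Finset.card_lt_card (Finset.ssubset_iff_of_subset hsub |>.mpr ⟨i', hmem, hnotmem⟩)
      obtain ⟨i'', h1, h2⟩ := ih i' (by omega) h
      exact ⟨i'', h1, fun j hj => lt_trans (hdomi j hj) (h2 j hj)⟩


lemma cert {n : ℕ} (R C : Fin n → Fin n → ℝ) (s : ℕ) (h2 : 2 ≤ s) (hsn : s ≤ n)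
    (hsol : Solvable R C) :
    (∃ Y : Finset (Fin n), Y.card = s ∧ ∃ D : Finset (Fin n), D.card = n - s ∧
      ∃ e : Fin n → Fin n, (∀ i ∈ D, e i ∉ D) ∧ (∀ i ∉ D, e i = i) ∧
        ∀ i ∈ D, ∀ j ∈ Y, R i j < R (e i) j)
    ∨ (∃ X : Finset (Fin n), X.card = s ∧ ∃ D : Finset (Fin n), D.card = n - s ∧
      ∃ e : Fin n → Fin n, (∀ j ∈ D, e j ∉ D) ∧ (∀ j ∉ D, e j = j) ∧
        ∀ j ∈ D, ∀ i ∈ X, C i j < C i (e j)) := by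
  classical
  have hsol' : (pIter R C (n+n)).1.card = 1 ∧ (pIter R C (n+n)).2.card = 1 := hsol
  have hfind : ∃ t, (pIter R C t).1.card < s ∨ (pIter R C t).2.card < s :=
    ⟨n+n, Or.inl (by omega)⟩
  set T := Nat.find hfind with hTdef
  have hT := Nat.find_spec hfind
  rw [← hTdef] at hT
  have hTpos : T ≠ 0 := by
    intro h0
    rw [h0] at hT
    have heq : (pIter R C 0) = (Finset.univ, Finset.univ) := rfl
    rw [heq] at hT
    simp only [Finset.card_univ, Fintype.card_fin] at hT
    omega
  have hprev : ¬ ((pIter R C (T-1)).1.card < s ∨ (pIter R C (T-1)).2.card < s) := by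
    rw [hTdef]
    exact Nat.find_min hfind (by omega)
  push_neg at hprev
  obtain ⟨hX', hY'⟩ := hprev
  rcases hT with h | h
  · -- rows collapsed
    left
    have hesc := escape R (fun t => (pIter R C t).1) ((pIter R C (T-1)).2) T rfl
      (Finset.card_pos.mp (by omega))
      (by
        intro t ht i hit hit1
        obtain ⟨i', hi', hd⟩ := row_dom_of_elim R C hit hit1
        exact ⟨i', hi', fun j hj => hd j (pIter_antitone₂ R C (by omega) hj)⟩)
    have hD'card : (Finset.univ \ (pIter R C T).1).card = n - (pIter R C T).1.card := by
      rw [Finset.card_sdiff_of_subset (Finset.subset_univ _), Finset.card_univ, Fintype.card_fin]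
    have hcardle : (pIter R C T).1.card ≤ n := by
      calc (pIter R C T).1.card ≤ Fintype.card (Fin n) := Finset.card_le_univ _
      _ = n := Fintype.card_fin n
    obtain ⟨D, hDsub, hDcard⟩ := Finset.exists_subset_card_eq (s := Finset.univ \ (pIter R C T).1)
      (n := n - s) (by rw [hD'card]; omega)
    obtain ⟨Y, hYsub, hYcard⟩ := Finset.exists_subset_card_eq hY'
    have hDnot : ∀ i ∈ D, i ∉ (pIter R C T).1 := by
      intro i hi
      have := hDsub hi
      simp only [Finset.mem_sdiff] at this
      exact this.2
    refine ⟨Y, hYcard, D, hDcard, fun i => if h : i ∈ D then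
      Classical.choose (hesc i (hDnot i h)) else i, ?_, ?_, ?_⟩
    · intro i hi
      simp only [dif_pos hi]
      intro hmem
      have hspec := Classical.choose_spec (hesc i (hDnot i hi))
      exact hDnot _ hmem hspec.1
    · intro i hi; simp only [dif_neg hi]
    · intro i hi j hj
      simp only [dif_pos hi]
      have hspec := Classical.choose_spec (hesc i (hDnot i hi))
      exact hspec.2 j (hYsub hj)
  · -- columns collapsed
    right
    have hesc := escape (fun j i => C i j) (fun t => (pIter R C t).2) ((pIter R C (T-1)).1) T rfl
      (Finset.card_pos.mp (by omega))
      (by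
        intro t ht j hjt hjt1
        obtain ⟨j', hj', hd⟩ := col_dom_of_elim R C hjt hjt1
        exact ⟨j', hj', fun i hi => hd i (pIter_antitone₁ R C (by omega) hi)⟩)
    have hD'card : (Finset.univ \ (pIter R C T).2).card = n - (pIter R C T).2.card := by
      rw [Finset.card_sdiff_of_subset (Finset.subset_univ _), Finset.card_univ, Fintype.card_fin]
    have hcardle : (pIter R C T).2.card ≤ n := by
      calc (pIter R C T).2.card ≤ Fintype.card (Fin n) := Finset.card_le_univ _
      _ = n := Fintype.card_fin n
    obtain ⟨D, hDsub, hDcard⟩ := Finset.exists_subset_card_eq (s := Finset.univ \ (pIter R C T).2)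
      (n := n - s) (by rw [hD'card]; omega)
    obtain ⟨X, hXsub, hXcard⟩ := Finset.exists_subset_card_eq hX'
    have hDnot : ∀ j ∈ D, j ∉ (pIter R C T).2 := by
      intro j hj
      have := hDsub hj
      simp only [Finset.mem_sdiff] at this
      exact this.2
    refine ⟨X, hXcard, D, hDcard, fun j => if h : j ∈ D then
      Classical.choose (hesc j (hDnot j h)) else j, ?_, ?_, ?_⟩
    · intro j hj
      simp only [dif_pos hj]
      intro hmem
      have hspec := Classical.choose_spec (hesc j (hDnot j hj))
      exact hDnot _ hmem hspec.1
    · intro j hj; simp only [dif_neg hj]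
    · intro j hj i hi
      simp only [dif_pos hj]
      have hspec := Classical.choose_spec (hesc j (hDnot j hj))
      exact hspec.2 i (hXsub hi)

lemma swap_count {n : ℕ} (B : Finset (Equiv.Perm (Fin n))) (T : Finset (Fin n)) (v : Fin n)
    (hv : v ∈ T) (hB : ∀ u ∈ T, ∀ σ ∈ B, σ * Equiv.swap v u ∈ B) :
    (B.filter fun σ => ∀ x ∈ T, x ≠ v → σ x < σ v).card * T.card ≤ B.card := by
  classical
  set A : Fin n → Finset (Equiv.Perm (Fin n)) :=
    fun u => B.filter fun σ => ∀ x ∈ T, x ≠ u → σ x < σ u with hA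
  have hcard : ∀ u ∈ T, (A v).card ≤ (A u).card := by
    intro u hu
    by_cases huv : u = v
    · subst huv; exact le_refl _
    · apply Finset.card_le_card_of_injOn (fun σ => σ * Equiv.swap v u)
      · intro σ hσ
        simp only [hA, Finset.mem_coe, Finset.mem_filter] at hσ ⊢
        refine ⟨hB u hu σ hσ.1, ?_⟩
        intro x hx hxu
        have happ : ∀ y, (σ * Equiv.swap v u) y = σ (Equiv.swap v u y) := fun y => rfl
        rw [happ, happ, Equiv.swap_apply_right]
        by_cases hxv : x = v
        · subst hxv
          rw [Equiv.swap_apply_left]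
          exact hσ.2 u hu huv
        · rw [Equiv.swap_apply_of_ne_of_ne hxv hxu]
          exact hσ.2 x hx hxv
      · intro σ1 _ σ2 _ heq
        simpa using mul_right_cancel heq
  have hdisj : ∀ u1 ∈ T, ∀ u2 ∈ T, u1 ≠ u2 → Disjoint (A u1) (A u2) := by
    intro u1 h1 u2 h2 hne
    rw [Finset.disjoint_left]
    intro σ hσ1 hσ2
    simp only [hA, Finset.mem_filter] at hσ1 hσ2
    exact absurd (hσ2.2 u1 h1 hne) (not_lt.mpr (hσ1.2 u2 h2 (Ne.symm hne)).le)
  calc (A v).card * T.card = ∑ _u ∈ T, (A v).card := by rw [Finset.sum_const, smul_eq_mul, mul_comm]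
  _ ≤ ∑ u ∈ T, (A u).card := Finset.sum_le_sum hcard
  _ = (T.biUnion A).card := (Finset.card_biUnion hdisj).symm
  _ ≤ B.card := Finset.card_le_card (by
      intro σ hσ
      simp only [Finset.mem_biUnion] at hσ
      obtain ⟨u, _, hσu⟩ := hσ
      exact (Finset.mem_filter.mp hσu).1)

lemma prod_one_add_le {α : Type*} [DecidableEq α] (S : Finset α) (f : α → ℕ) :
    (∑ v ∈ S, f v) + 1 ≤ ∏ v ∈ S, (f v + 1) := by
  induction S using Finset.induction_on with
  | empty => simp
  | insert v S' hvS ih =>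
    rw [Finset.sum_insert hvS, Finset.prod_insert hvS]
    have h2 := Nat.mul_le_mul_left (f v + 1) ih
    have h3 : f v + (∑ x ∈ S', f x) + 1 ≤ (f v + 1) * ((∑ x ∈ S', f x) + 1) := by
      have expand : (f v + 1) * ((∑ x ∈ S', f x) + 1) =
          f v * (∑ x ∈ S', f x) + (f v + ((∑ x ∈ S', f x) + 1)) := by ring
      rw [expand]
      omega
    exact le_trans h3 h2

lemma count_main {n : ℕ} (D : Finset (Fin n)) (e : Fin n → Fin n) (he : ∀ i ∈ D, e i ∉ D) :
    (Finset.univ.filter fun σ : Equiv.Perm (Fin n) => ∀ i ∈ D, σ i < σ (e i)).card *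
      (D.card + 1) ≤ Fintype.card (Equiv.Perm (Fin n)) := by
  classical
  have key : ∀ S : Finset (Fin n), S ⊆ D.image e →
      (Finset.univ.filter fun σ : Equiv.Perm (Fin n) =>
        ∀ i ∈ D, e i ∈ S → σ i < σ (e i)).card *
        ∏ v ∈ S, ((D.filter fun i => e i = v).card + 1) ≤ Fintype.card (Equiv.Perm (Fin n)) := by
    intro S
    induction S using Finset.induction_on with
    | empty =>
      intro _
      simp [Finset.filter_true_of_mem, Finset.card_univ]
    | insert v S' hvS ih =>
      intro hsub
      have hS'sub : S' ⊆ D.image e := fun x hx => hsub (Finset.mem_insert_of_mem hx)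
      have hvimg : v ∈ D.image e := hsub (Finset.mem_insert_self v S')
      have hvD : v ∉ D := by
        obtain ⟨i₀, hi₀, hei₀⟩ := Finset.mem_image.mp hvimg
        rw [← hei₀]; exact he i₀ hi₀
      set B := Finset.univ.filter fun σ : Equiv.Perm (Fin n) =>
        ∀ i ∈ D, e i ∈ S' → σ i < σ (e i) with hBdef
      set Tv := insert v (D.filter fun i => e i = v) with hTv
      have hvTv : v ∈ Tv := Finset.mem_insert_self _ _
      have hclosed : ∀ u ∈ Tv, ∀ σ ∈ B, σ * Equiv.swap v u ∈ B := by
        intro u hu σ hσ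
        simp only [hBdef, Finset.mem_filter, Finset.mem_univ, true_and] at hσ ⊢
        intro i hiD hiS
        have happ : ∀ y, (σ * Equiv.swap v u) y = σ (Equiv.swap v u y) := fun y => rfl
        by_cases huv : u = v
        · subst huv; simpa [happ, Equiv.swap_self] using hσ i hiD hiS
        · have hu' : u ∈ D ∧ e u = v := by
            rcases Finset.mem_insert.mp hu with h | h
            · exact absurd h huv
            · exact Finset.mem_filter.mp h
          have hiv : i ≠ v := fun h => hvD (h ▸ hiD)
          have hiu : i ≠ u := by
            intro h
            rw [h] at hiS
            rw [hu'.2] at hiS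
            exact hvS hiS
          have heiv : e i ≠ v := fun h => hvS (h ▸ hiS)
          have heiu : e i ≠ u := by
            intro h
            exact he i hiD (h ▸ hu'.1)
          rw [happ, happ, Equiv.swap_apply_of_ne_of_ne hiv hiu,
            Equiv.swap_apply_of_ne_of_ne heiv heiu]
          exact hσ i hiD hiS
      have hfeq : (Finset.univ.filter fun σ : Equiv.Perm (Fin n) =>
          ∀ i ∈ D, e i ∈ insert v S' → σ i < σ (e i)) =
          B.filter fun σ => ∀ x ∈ Tv, x ≠ v → σ x < σ v := by
        ext σ
        constructor
        · intro h
          have h' := (Finset.mem_filter.mp h).2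
          refine Finset.mem_filter.mpr ⟨Finset.mem_filter.mpr ⟨Finset.mem_univ σ,
            fun i hiD hiS => h' i hiD (Finset.mem_insert_of_mem hiS)⟩, ?_⟩
          intro x hx hxv
          rcases Finset.mem_insert.mp hx with h'' | h''
          · exact absurd h'' hxv
          · obtain ⟨hxD, hxe⟩ := Finset.mem_filter.mp h''
            have := h' x hxD (by rw [hxe]; exact Finset.mem_insert_self v S')
            rwa [hxe] at this
        · intro h
          obtain ⟨hB', h2⟩ := Finset.mem_filter.mp h
          have h1 := (Finset.mem_filter.mp hB').2
          refine Finset.mem_filter.mpr ⟨Finset.mem_univ σ, ?_⟩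
          intro i hiD hiS
          rcases Finset.mem_insert.mp hiS with h'' | h''
          · have hiv : i ≠ v := fun hh => hvD (hh ▸ hiD)
            have : σ i < σ v := h2 i (Finset.mem_insert_of_mem
              (Finset.mem_filter.mpr ⟨hiD, h''⟩)) hiv
            rwa [← h''] at this
          · exact h1 i hiD h''
      have hTvcard : Tv.card = (D.filter fun i => e i = v).card + 1 := by
        rw [hTv, Finset.card_insert_of_notMem (fun h => hvD (Finset.mem_filter.mp h).1)]
      rw [Finset.prod_insert hvS, hfeq]
      calc (B.filter fun σ => ∀ x ∈ Tv, x ≠ v → σ x < σ v).card *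
            (((D.filter fun i => e i = v).card + 1) * ∏ v ∈ S', ((D.filter fun i => e i = v).card + 1))
          = ((B.filter fun σ => ∀ x ∈ Tv, x ≠ v → σ x < σ v).card * Tv.card) *
            ∏ v ∈ S', ((D.filter fun i => e i = v).card + 1) := by rw [hTvcard]; ring
        _ ≤ B.card * ∏ v ∈ S', ((D.filter fun i => e i = v).card + 1) :=
            Nat.mul_le_mul_right _ (swap_count B Tv v hvTv hclosed)
        _ ≤ Fintype.card (Equiv.Perm (Fin n)) := ih hS'sub
  have h1 : (Finset.univ.filter fun σ : Equiv.Perm (Fin n) => ∀ i ∈ D, σ i < σ (e i)) =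
      (Finset.univ.filter fun σ : Equiv.Perm (Fin n) =>
        ∀ i ∈ D, e i ∈ D.image e → σ i < σ (e i)) := by
    ext σ
    simp only [Finset.mem_filter, Finset.mem_univ, true_and]
    exact ⟨fun h i hi _ => h i hi, fun h i hi => h i hi (Finset.mem_image_of_mem e hi)⟩
  have h2 : D.card + 1 ≤ ∏ v ∈ D.image e, ((D.filter fun i => e i = v).card + 1) := by
    have hsum : ∑ v ∈ D.image e, (D.filter fun i => e i = v).card = D.card := by
      rw [← Finset.card_eq_sum_card_fiberwise (fun i hi => Finset.mem_image_of_mem e hi)]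
    rw [← hsum]
    exact prod_one_add_le _ _
  calc (Finset.univ.filter fun σ : Equiv.Perm (Fin n) => ∀ i ∈ D, σ i < σ (e i)).card * (D.card + 1)
      ≤ (Finset.univ.filter fun σ : Equiv.Perm (Fin n) =>
          ∀ i ∈ D, e i ∈ D.image e → σ i < σ (e i)).card *
        ∏ v ∈ D.image e, ((D.filter fun i => e i = v).card + 1) := by
        rw [← h1]; exact Nat.mul_le_mul_left _ h2
    _ ≤ Fintype.card (Equiv.Perm (Fin n)) := key _ (Finset.Subset.refl _)

section probpart

open Classical

lemma card_funFilter {n : ℕ} (Y : Finset (Fin n)) (Q : Equiv.Perm (Fin n) → Prop)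
    [DecidablePred Q] :
    (Finset.univ.filter fun f : Fin n → Equiv.Perm (Fin n) => ∀ j ∈ Y, Q (f j)).card
      = (Finset.univ.filter Q).card ^ Y.card *
        (Fintype.card (Equiv.Perm (Fin n))) ^ (n - Y.card) := by
  classical
  have heq : (Finset.univ.filter fun f : Fin n → Equiv.Perm (Fin n) => ∀ j ∈ Y, Q (f j))
      = Fintype.piFinset (fun j => if j ∈ Y then Finset.univ.filter Q else Finset.univ) := by
    ext f
    simp only [Finset.mem_filter, Finset.mem_univ, true_and, Fintype.mem_piFinset]
    constructor
    · intro h j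
      by_cases hj : j ∈ Y
      · simp only [if_pos hj, Finset.mem_filter, Finset.mem_univ, true_and]
        exact h j hj
      · simp [if_neg hj]
    · intro h j hj
      have := h j
      rw [if_pos hj] at this
      exact (Finset.mem_filter.mp this).2
  rw [heq, Fintype.card_piFinset]
  have hcards : ∀ j : Fin n,
      (if j ∈ Y then Finset.univ.filter Q else (Finset.univ : Finset (Equiv.Perm (Fin n)))).card
      = if j ∈ Y then (Finset.univ.filter Q).card else Fintype.card (Equiv.Perm (Fin n)) := by
    intro j; split <;> simp [Finset.card_univ]
  rw [Finset.prod_congr rfl (fun j _ => hcards j), Finset.prod_ite, Finset.prod_const,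
    Finset.prod_const]
  have hY : Finset.univ.filter (fun j => j ∈ Y) = Y := by ext j; simp
  have hYc : Finset.univ.filter (fun j : Fin n => ¬ j ∈ Y) = Yᶜ := by
    ext j; simp [Finset.mem_compl]
  rw [hY, hYc, Finset.card_compl, Fintype.card_fin]

lemma card_prod_fst {n : ℕ} (P : (Fin n → Equiv.Perm (Fin n)) → Prop) [DecidablePred P] :
    (Finset.univ.filter fun ω : Omega n n => P ω.1).card
      = (Finset.univ.filter P).card * Fintype.card (Fin n → Equiv.Perm (Fin n)) := by
  classical
  have heq : (Finset.univ.filter fun ω : Omega n n => P ω.1)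
      = (Finset.univ.filter P) ×ˢ Finset.univ := by
    ext ⟨a, b⟩
    simp [Finset.mem_product]
  rw [heq, Finset.card_product, Finset.card_univ]

lemma card_prod_snd {n : ℕ} (P : (Fin n → Equiv.Perm (Fin n)) → Prop) [DecidablePred P] :
    (Finset.univ.filter fun ω : Omega n n => P ω.2).card
      = Fintype.card (Fin n → Equiv.Perm (Fin n)) * (Finset.univ.filter P).card := by
  classical
  have heq : (Finset.univ.filter fun ω : Omega n n => P ω.2)
      = Finset.univ ×ˢ (Finset.univ.filter P) := by
    ext ⟨a, b⟩
    simp [Finset.mem_product]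
  rw [heq, Finset.card_product, Finset.card_univ]

lemma card_omega {n : ℕ} :
    Fintype.card (Omega n n) = (Fintype.card (Equiv.Perm (Fin n))) ^ (n + n) := by
  classical
  rw [pow_add]
  simp [Fintype.card_prod, Fintype.card_fun]

/-- bound for the row-type event -/
lemma rowEvt_bound {n s : ℕ} (hsn : s ≤ n) (Y D : Finset (Fin n)) (e : Fin n → Fin n)
    (hY : Y.card = s) (hD : D.card = n - s) (he : ∀ i ∈ D, e i ∉ D) :
    (Finset.univ.filter fun ω : Omega n n =>
        ∀ i ∈ D, ∀ j ∈ Y, RPay ω i j < RPay ω (e i) j).card * (n - s + 1) ^ s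
      ≤ (Fintype.card (Equiv.Perm (Fin n))) ^ (n + n) := by
  classical
  set Q : Equiv.Perm (Fin n) → Prop := fun σ => ∀ i ∈ D, σ i < σ (e i) with hQ
  have hpred : (Finset.univ.filter fun ω : Omega n n =>
      ∀ i ∈ D, ∀ j ∈ Y, RPay ω i j < RPay ω (e i) j)
      = (Finset.univ.filter fun ω : Omega n n => ∀ j ∈ Y, Q (ω.1 j)) := by
    ext ω
    simp only [Finset.mem_filter, Finset.mem_univ, true_and, hQ]
    constructor
    · intro h j hj i hi
      have := h i hi j hj
      simp only [RPay] at this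
      exact_mod_cast this
    · intro h i hi j hj
      have := h j hj i hi
      simp only [RPay]
      exact_mod_cast this
  rw [hpred, card_prod_fst (fun f => ∀ j ∈ Y, Q (f j)),
    (by convert card_funFilter Y Q : (Finset.univ.filter fun f : Fin n → Equiv.Perm (Fin n) =>
      ∀ j ∈ Y, Q (f j)).card = (Finset.univ.filter Q).card ^ Y.card *
        (Fintype.card (Equiv.Perm (Fin n))) ^ (n - Y.card)), hY]
  have hcm := count_main D e he
  rw [hD] at hcm
  have hpow : (Finset.univ.filter Q).card ^ s * (n - s + 1) ^ s
      ≤ (Fintype.card (Equiv.Perm (Fin n))) ^ s := by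
    rw [← mul_pow]
    exact Nat.pow_le_pow_left hcm s
  have hfun : Fintype.card (Fin n → Equiv.Perm (Fin n))
      = (Fintype.card (Equiv.Perm (Fin n))) ^ n := by
    simp [Fintype.card_fun]
  calc (Finset.univ.filter Q).card ^ s * (Fintype.card (Equiv.Perm (Fin n))) ^ (n - s) *
        Fintype.card (Fin n → Equiv.Perm (Fin n)) * (n - s + 1) ^ s
      = ((Finset.univ.filter Q).card ^ s * (n - s + 1) ^ s) *
        ((Fintype.card (Equiv.Perm (Fin n))) ^ (n - s) *
          (Fintype.card (Equiv.Perm (Fin n))) ^ n) := by rw [hfun]; ring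
    _ ≤ ((Fintype.card (Equiv.Perm (Fin n))) ^ s) *
        ((Fintype.card (Equiv.Perm (Fin n))) ^ (n - s) *
          (Fintype.card (Equiv.Perm (Fin n))) ^ n) := Nat.mul_le_mul_right _ hpow
    _ = (Fintype.card (Equiv.Perm (Fin n))) ^ (n + n) := by
        rw [← pow_add, ← pow_add]
        congr 1
        omega

/-- bound for the column-type event -/
lemma colEvt_bound {n s : ℕ} (hsn : s ≤ n) (X D : Finset (Fin n)) (e : Fin n → Fin n)
    (hX : X.card = s) (hD : D.card = n - s) (he : ∀ j ∈ D, e j ∉ D) :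
    (Finset.univ.filter fun ω : Omega n n =>
        ∀ j ∈ D, ∀ i ∈ X, CPay ω i j < CPay ω i (e j)).card * (n - s + 1) ^ s
      ≤ (Fintype.card (Equiv.Perm (Fin n))) ^ (n + n) := by
  classical
  set Q : Equiv.Perm (Fin n) → Prop := fun σ => ∀ j ∈ D, σ j < σ (e j) with hQ
  have hpred : (Finset.univ.filter fun ω : Omega n n =>
      ∀ j ∈ D, ∀ i ∈ X, CPay ω i j < CPay ω i (e j))
      = (Finset.univ.filter fun ω : Omega n n => ∀ i ∈ X, Q (ω.2 i)) := by
    ext ω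
    simp only [Finset.mem_filter, Finset.mem_univ, true_and, hQ]
    constructor
    · intro h i hi j hj
      have := h j hj i hi
      simp only [CPay] at this
      exact_mod_cast this
    · intro h j hj i hi
      have := h i hi j hj
      simp only [CPay]
      exact_mod_cast this
  rw [hpred, card_prod_snd (fun f => ∀ j ∈ X, Q (f j)),
    (by convert card_funFilter X Q : (Finset.univ.filter fun f : Fin n → Equiv.Perm (Fin n) =>
      ∀ j ∈ X, Q (f j)).card = (Finset.univ.filter Q).card ^ X.card *
        (Fintype.card (Equiv.Perm (Fin n))) ^ (n - X.card)), hX]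
  have hcm := count_main D e he
  rw [hD] at hcm
  have hpow : (Finset.univ.filter Q).card ^ s * (n - s + 1) ^ s
      ≤ (Fintype.card (Equiv.Perm (Fin n))) ^ s := by
    rw [← mul_pow]
    exact Nat.pow_le_pow_left hcm s
  have hfun : Fintype.card (Fin n → Equiv.Perm (Fin n))
      = (Fintype.card (Equiv.Perm (Fin n))) ^ n := by
    simp [Fintype.card_fun]
  calc Fintype.card (Fin n → Equiv.Perm (Fin n)) *
        ((Finset.univ.filter Q).card ^ s * (Fintype.card (Equiv.Perm (Fin n))) ^ (n - s)) *
        (n - s + 1) ^ s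
      = ((Finset.univ.filter Q).card ^ s * (n - s + 1) ^ s) *
        ((Fintype.card (Equiv.Perm (Fin n))) ^ (n - s) *
          (Fintype.card (Equiv.Perm (Fin n))) ^ n) := by rw [hfun]; ring
    _ ≤ ((Fintype.card (Equiv.Perm (Fin n))) ^ s) *
        ((Fintype.card (Equiv.Perm (Fin n))) ^ (n - s) *
          (Fintype.card (Equiv.Perm (Fin n))) ^ n) := Nat.mul_le_mul_right _ hpow
    _ = (Fintype.card (Equiv.Perm (Fin n))) ^ (n + n) := by
        rw [← pow_add, ← pow_add]
        congr 1
        omega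

end probpart

section unionpart
open Classical

lemma pi_bound (n s : ℕ) (h2 : 2 ≤ s) (hsn : s ≤ n) :
    probSolvable n n ≤ 2 * 4 ^ n * ((n : ℝ) ^ (n - s)) / (((n - s : ℕ) : ℝ) + 1) ^ s := by
  classical
  set pc := Fintype.card (Equiv.Perm (Fin n)) with hpc
  set M := pc ^ (n + n) with hM
  have hpcpos : 0 < pc := Fintype.card_pos
  have hMpos : 0 < M := pow_pos hpcpos _
  set Es : Finset (Fin n) → Finset (Fin n → Fin n) := fun D =>
    Finset.univ.filter (fun e => (∀ i ∈ D, e i ∉ D) ∧ (∀ i ∉ D, e i = i)) with hEs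
  have hEsCard : ∀ D : Finset (Fin n), D.card = n - s → (Es D).card ≤ n ^ (n - s) := by
    intro D hD
    have hinj : ∀ e1 ∈ Es D, ∀ e2 ∈ Es D,
        (fun i : ↥D => e1 i) = (fun i : ↥D => e2 i) → e1 = e2 := by
      intro e1 h1 e2 h2 heq
      obtain ⟨-, h1b⟩ := (Finset.mem_filter.mp h1).2
      obtain ⟨-, h2b⟩ := (Finset.mem_filter.mp h2).2
      funext i
      by_cases hi : i ∈ D
      · exact congrFun heq ⟨i, hi⟩
      · rw [h1b i hi, h2b i hi]
    have := Finset.card_le_card_of_injOn (fun e (i : ↥D) => e i)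
      (fun e _ => Finset.mem_univ _) (fun e1 h1 e2 h2 => hinj e1 h1 e2 h2)
    calc (Es D).card ≤ (Finset.univ : Finset (↥D → Fin n)).card := this
      _ = n ^ (n - s) := by
          rw [Finset.card_univ, Fintype.card_fun, Fintype.card_coe, hD, Fintype.card_fin]
  have hPcard : ∀ r : ℕ, (Finset.powersetCard r (Finset.univ : Finset (Fin n))).card ≤ 2 ^ n := by
    intro r
    have hsub : Finset.powersetCard r (Finset.univ : Finset (Fin n)) ⊆
        (Finset.univ : Finset (Fin n)).powerset :=
      fun x hx => Finset.mem_powerset.mpr (Finset.mem_powersetCard.mp hx).1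
    calc (Finset.powersetCard r (Finset.univ : Finset (Fin n))).card
        ≤ (Finset.univ : Finset (Fin n)).powerset.card := Finset.card_le_card hsub
      _ = 2 ^ n := by rw [Finset.card_powerset, Finset.card_univ, Fintype.card_fin]
  set K := (n - s + 1) ^ s with hK
  set evtR : Finset (Fin n) → Finset (Fin n) → (Fin n → Fin n) → Finset (Omega n n) :=
    fun Y D e => Finset.univ.filter
      (fun ω : Omega n n => ∀ i ∈ D, ∀ j ∈ Y, RPay ω i j < RPay ω (e i) j) with hevtR
  set evtC : Finset (Fin n) → Finset (Fin n) → (Fin n → Fin n) → Finset (Omega n n) :=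
    fun X D e => Finset.univ.filter
      (fun ω : Omega n n => ∀ j ∈ D, ∀ i ∈ X, CPay ω i j < CPay ω i (e j)) with hevtC
  set rowU := (Finset.powersetCard s (Finset.univ : Finset (Fin n))).biUnion (fun Y =>
    (Finset.powersetCard (n - s) (Finset.univ : Finset (Fin n))).biUnion (fun D =>
      (Es D).biUnion (fun e => evtR Y D e))) with hrowU
  set colU := (Finset.powersetCard s (Finset.univ : Finset (Fin n))).biUnion (fun X =>
    (Finset.powersetCard (n - s) (Finset.univ : Finset (Fin n))).biUnion (fun D =>
      (Es D).biUnion (fun e => evtC X D e))) with hcolU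
  set Bad := Finset.univ.filter (fun ω : Omega n n => GameSolvable ω) with hBad
  -- inclusion
  have hsub : Bad ⊆ rowU ∪ colU := by
    intro ω hω
    have hsol : Solvable (RPay ω) (CPay ω) := (Finset.mem_filter.mp hω).2
    rcases cert (RPay ω) (CPay ω) s h2 hsn hsol with
      ⟨Y, hY, D, hD, e, he1, he2, he3⟩ | ⟨X, hX, D, hD, e, he1, he2, he3⟩
    · apply Finset.mem_union_left
      rw [hrowU]
      apply Finset.mem_biUnion.mpr
      refine ⟨Y, Finset.mem_powersetCard.mpr ⟨Finset.subset_univ _, hY⟩, ?_⟩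
      apply Finset.mem_biUnion.mpr
      refine ⟨D, Finset.mem_powersetCard.mpr ⟨Finset.subset_univ _, hD⟩, ?_⟩
      apply Finset.mem_biUnion.mpr
      refine ⟨e, Finset.mem_filter.mpr ⟨Finset.mem_univ _, he1, he2⟩, ?_⟩
      exact Finset.mem_filter.mpr ⟨Finset.mem_univ _, he3⟩
    · apply Finset.mem_union_right
      rw [hcolU]
      apply Finset.mem_biUnion.mpr
      refine ⟨X, Finset.mem_powersetCard.mpr ⟨Finset.subset_univ _, hX⟩, ?_⟩
      apply Finset.mem_biUnion.mpr
      refine ⟨D, Finset.mem_powersetCard.mpr ⟨Finset.subset_univ _, hD⟩, ?_⟩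
      apply Finset.mem_biUnion.mpr
      refine ⟨e, Finset.mem_filter.mpr ⟨Finset.mem_univ _, he1, he2⟩, ?_⟩
      exact Finset.mem_filter.mpr ⟨Finset.mem_univ _, he3⟩
  -- counting
  have hstep1R : ∀ Y D : Finset (Fin n), Y.card = s → D.card = n - s →
      ((Es D).biUnion (fun e => evtR Y D e)).card * K ≤ n ^ (n - s) * M := by
    intro Y D hY hD
    calc ((Es D).biUnion (fun e => evtR Y D e)).card * K
        ≤ (∑ e ∈ Es D, (evtR Y D e).card) * K :=
          Nat.mul_le_mul_right _ (Finset.card_biUnion_le)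
      _ = ∑ e ∈ Es D, ((evtR Y D e).card * K) := by rw [Finset.sum_mul]
      _ ≤ ∑ _e ∈ Es D, M := by
          apply Finset.sum_le_sum
          intro e hee
          have he1 := ((Finset.mem_filter.mp hee).2).1
          exact rowEvt_bound hsn Y D e hY hD he1
      _ = (Es D).card * M := by rw [Finset.sum_const, smul_eq_mul]
      _ ≤ n ^ (n - s) * M := Nat.mul_le_mul_right _ (hEsCard D hD)
  have hstep1C : ∀ X D : Finset (Fin n), X.card = s → D.card = n - s →
      ((Es D).biUnion (fun e => evtC X D e)).card * K ≤ n ^ (n - s) * M := by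
    intro X D hX hD
    calc ((Es D).biUnion (fun e => evtC X D e)).card * K
        ≤ (∑ e ∈ Es D, (evtC X D e).card) * K :=
          Nat.mul_le_mul_right _ (Finset.card_biUnion_le)
      _ = ∑ e ∈ Es D, ((evtC X D e).card * K) := by rw [Finset.sum_mul]
      _ ≤ ∑ _e ∈ Es D, M := by
          apply Finset.sum_le_sum
          intro e hee
          have he1 := ((Finset.mem_filter.mp hee).2).1
          exact colEvt_bound hsn X D e hX hD he1
      _ = (Es D).card * M := by rw [Finset.sum_const, smul_eq_mul]
      _ ≤ n ^ (n - s) * M := Nat.mul_le_mul_right _ (hEsCard D hD)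
  have hstep2 : ∀ (evt : Finset (Fin n) → Finset (Fin n) → (Fin n → Fin n) → Finset (Omega n n)),
      (∀ Y D : Finset (Fin n), Y.card = s → D.card = n - s →
        ((Es D).biUnion (fun e => evt Y D e)).card * K ≤ n ^ (n - s) * M) →
      ((Finset.powersetCard s (Finset.univ : Finset (Fin n))).biUnion (fun Y =>
        (Finset.powersetCard (n - s) (Finset.univ : Finset (Fin n))).biUnion (fun D =>
          (Es D).biUnion (fun e => evt Y D e)))).card * K
        ≤ 2 ^ n * (2 ^ n * (n ^ (n - s) * M)) := by
    intro evt hevt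
    have inner : ∀ Y : Finset (Fin n), Y.card = s →
        ((Finset.powersetCard (n - s) (Finset.univ : Finset (Fin n))).biUnion (fun D =>
          (Es D).biUnion (fun e => evt Y D e))).card * K ≤ 2 ^ n * (n ^ (n - s) * M) := by
      intro Y hY
      calc ((Finset.powersetCard (n - s) (Finset.univ : Finset (Fin n))).biUnion (fun D =>
            (Es D).biUnion (fun e => evt Y D e))).card * K
          ≤ (∑ D ∈ Finset.powersetCard (n - s) (Finset.univ : Finset (Fin n)),
              ((Es D).biUnion (fun e => evt Y D e)).card) * K :=
            Nat.mul_le_mul_right _ (Finset.card_biUnion_le)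
        _ = ∑ D ∈ Finset.powersetCard (n - s) (Finset.univ : Finset (Fin n)),
              (((Es D).biUnion (fun e => evt Y D e)).card * K) := by rw [Finset.sum_mul]
        _ ≤ ∑ _D ∈ Finset.powersetCard (n - s) (Finset.univ : Finset (Fin n)),
              (n ^ (n - s) * M) := by
            apply Finset.sum_le_sum
            intro D hD
            exact hevt Y D hY (Finset.mem_powersetCard.mp hD).2
        _ = (Finset.powersetCard (n - s) (Finset.univ : Finset (Fin n))).card *
              (n ^ (n - s) * M) := by rw [Finset.sum_const, smul_eq_mul]
        _ ≤ 2 ^ n * (n ^ (n - s) * M) := Nat.mul_le_mul_right _ (hPcard _)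
    calc ((Finset.powersetCard s (Finset.univ : Finset (Fin n))).biUnion _).card * K
        ≤ (∑ Y ∈ Finset.powersetCard s (Finset.univ : Finset (Fin n)),
            ((Finset.powersetCard (n - s) (Finset.univ : Finset (Fin n))).biUnion (fun D =>
              (Es D).biUnion (fun e => evt Y D e))).card) * K :=
          Nat.mul_le_mul_right _ (Finset.card_biUnion_le)
      _ = ∑ Y ∈ Finset.powersetCard s (Finset.univ : Finset (Fin n)),
            (((Finset.powersetCard (n - s) (Finset.univ : Finset (Fin n))).biUnion (fun D =>
              (Es D).biUnion (fun e => evt Y D e))).card * K) := by rw [Finset.sum_mul]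
      _ ≤ ∑ _Y ∈ Finset.powersetCard s (Finset.univ : Finset (Fin n)),
            (2 ^ n * (n ^ (n - s) * M)) := by
          apply Finset.sum_le_sum
          intro Y hY
          exact inner Y (Finset.mem_powersetCard.mp hY).2
      _ = (Finset.powersetCard s (Finset.univ : Finset (Fin n))).card *
            (2 ^ n * (n ^ (n - s) * M)) := by rw [Finset.sum_const, smul_eq_mul]
      _ ≤ 2 ^ n * (2 ^ n * (n ^ (n - s) * M)) := Nat.mul_le_mul_right _ (hPcard _)
  have hmainN : Bad.card * K ≤ 2 * (2 ^ n * (2 ^ n * (n ^ (n - s) * M))) := by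
    calc Bad.card * K ≤ (rowU ∪ colU).card * K :=
          Nat.mul_le_mul_right _ (Finset.card_le_card hsub)
      _ ≤ (rowU.card + colU.card) * K := Nat.mul_le_mul_right _ (Finset.card_union_le _ _)
      _ = rowU.card * K + colU.card * K := by ring
      _ ≤ 2 ^ n * (2 ^ n * (n ^ (n - s) * M)) + 2 ^ n * (2 ^ n * (n ^ (n - s) * M)) :=
          Nat.add_le_add (hstep2 evtR hstep1R) (hstep2 evtC hstep1C)
      _ = 2 * (2 ^ n * (2 ^ n * (n ^ (n - s) * M))) := by ring
  -- pass to reals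
  have hPr : probSolvable n n = (Bad.card : ℝ) / (M : ℝ) := by
    have h1 : {ω : Omega n n | GameSolvable ω}.toFinite.toFinset = Bad := by
      ext ω
      simp [Set.Finite.mem_toFinset, hBad]
    have h2' : Fintype.card (Omega n n) = M := card_omega
    rw [probSolvable, Pr, h1, h2']
  rw [hPr]
  have hKpos : (0 : ℝ) < (K : ℝ) := by positivity
  have hMpos' : (0 : ℝ) < (M : ℝ) := by exact_mod_cast hMpos
  rw [div_le_div_iff₀ hMpos' (by positivity)]
  have hcast : ((((n - s : ℕ) : ℝ)) + 1) ^ s = (K : ℝ) := by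
    rw [hK]
    push_cast
    ring
  rw [hcast]
  calc (Bad.card : ℝ) * (K : ℝ) ≤ ((2 * (2 ^ n * (2 ^ n * (n ^ (n - s) * M))) : ℕ) : ℝ) := by
        exact_mod_cast hmainN
    _ = 2 * 4 ^ n * (n : ℝ) ^ (n - s) * (M : ℝ) := by
        have h4 : (4 : ℝ) ^ n = 2 ^ n * 2 ^ n := by
          rw [show (4 : ℝ) = 2 * 2 by norm_num, mul_pow]
        push_cast
        rw [h4]
        ring
end unionpart

end
end AUXSECT

/-- For every `0 < ε < 1/3` there exists `N` such that for all `n ≥ N`,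
`π(n,n) ≤ n^(−(1/3−ε)·n)`. -/
theorem stmt16 (ε : ℝ) (hε : 0 < ε) (hε' : ε < 1 / 3) :
    ∃ N : ℕ, ∀ n : ℕ, N ≤ n →
      probSolvable n n ≤ (n : ℝ) ^ (-(1 / 3 - ε) * (n : ℝ)) := by
  classical
  set β : ℝ := 2/3 - ε/4 with hβ
  have hβpos : 0 < β := by rw [hβ]; linarith
  have hβlt : β < 1 := by rw [hβ]; linarith
  have h1βpos : 0 < 1 - β := by linarith
  have h1βlt : 1 - β ≤ 1 := by linarith
  set C' : ℝ := Real.log 4 - β * Real.log (1 - β) with hC'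
  refine ⟨max 4 (⌈Real.exp (2 * (C' + 1) / ε)⌉₊ + 1), ?_⟩
  intro n hn
  have hn4 : 4 ≤ n := le_trans (le_max_left _ _) hn
  have hnexp : Real.exp (2 * (C' + 1) / ε) ≤ (n : ℝ) := by
    have h1 : (⌈Real.exp (2 * (C' + 1) / ε)⌉₊ : ℝ) ≤ (n : ℝ) := by
      have h2 := le_trans (le_max_right 4 _) hn
      exact_mod_cast le_trans (Nat.le_succ _) h2
    exact le_trans (Nat.le_ceil _) h1
  have hn0 : (0 : ℝ) < (n : ℝ) := by
    have : 0 < n := by omega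
    exact_mod_cast this
  have hn1 : (1 : ℝ) ≤ (n : ℝ) := by
    have : 1 ≤ n := by omega
    exact_mod_cast this
  -- define s and k
  set s : ℕ := ⌈β * (n : ℝ)⌉₊ with hs
  have hsres : β * (n : ℝ) ≤ (s : ℝ) := Nat.le_ceil _
  have hsub : (s : ℝ) ≤ β * (n : ℝ) + 1 := by
    have := Nat.ceil_lt_add_one (a := β * (n : ℝ)) (by positivity)
    linarith
  have hsn : s ≤ n := by
    rw [hs]
    apply Nat.ceil_le.mpr
    calc β * (n : ℝ) ≤ 1 * (n : ℝ) := by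
          apply mul_le_mul_of_nonneg_right (le_of_lt hβlt) (le_of_lt hn0)
      _ = (n : ℝ) := one_mul _
  have hs2 : 2 ≤ s := by
    have h7 : (7:ℝ)/12 ≤ β := by rw [hβ]; linarith
    have : (2 : ℝ) < (s : ℝ) := by
      calc (2:ℝ) < 7/12 * 4 := by norm_num
        _ ≤ β * (n : ℝ) := by
            apply mul_le_mul h7 (by exact_mod_cast hn4) (by norm_num) (le_of_lt hβpos)
        _ ≤ (s : ℝ) := hsres
    exact_mod_cast le_of_lt this
  set k : ℕ := n - s with hk
  have hkcast : (k : ℝ) = (n : ℝ) - (s : ℝ) := by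
    rw [hk, Nat.cast_sub hsn]
  have hkup : (k : ℝ) ≤ (1 - β) * (n : ℝ) := by rw [hkcast]; linarith
  have hklow : (1 - β) * (n : ℝ) ≤ (k : ℝ) + 1 := by rw [hkcast]; linarith
  have h1βn1 : (1 : ℝ) ≤ (1 - β) * (n : ℝ) := by
    calc (1:ℝ) = 1/3 * 3 := by norm_num
      _ ≤ (1 - β) * (n : ℝ) := by
          apply mul_le_mul (by rw [hβ]; linarith) (by exact_mod_cast (by omega : 3 ≤ n))
            (by norm_num) (le_of_lt h1βpos)
  -- the bound from pi_bound
  have hπ := pi_bound n s hs2 hsn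
  rw [← hk] at hπ
  refine le_trans hπ ?_
  -- positivity facts
  have hk1pos : (0 : ℝ) < (k : ℝ) + 1 := by positivity
  have hL1 : (0 : ℝ) < 2 * 4 ^ n * (n : ℝ) ^ k := by positivity
  have hLpos : (0 : ℝ) < 2 * 4 ^ n * ((n : ℝ) ^ k) / ((k : ℝ) + 1) ^ s := by positivity
  have hRpos : (0 : ℝ) < (n : ℝ) ^ (-(1 / 3 - ε) * (n : ℝ)) := Real.rpow_pos_of_pos hn0 _
  rw [← Real.log_le_log_iff hLpos hRpos]
  -- compute logs
  have hlogL : Real.log (2 * 4 ^ n * ((n : ℝ) ^ k) / ((k : ℝ) + 1) ^ s)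
      = Real.log 2 + (n : ℝ) * Real.log 4 + (k : ℝ) * Real.log (n : ℝ)
        - (s : ℝ) * Real.log ((k : ℝ) + 1) := by
    rw [Real.log_div (ne_of_gt hL1) (by positivity), Real.log_mul (by positivity) (by positivity),
      Real.log_mul (by norm_num) (by positivity), Real.log_pow, Real.log_pow, Real.log_pow]
  have hlogR : Real.log ((n : ℝ) ^ (-(1 / 3 - ε) * (n : ℝ)))
      = (-(1 / 3 - ε) * (n : ℝ)) * Real.log (n : ℝ) := Real.log_rpow hn0 _
  rw [hlogL, hlogR]
  -- main analytic inequality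
  set x : ℝ := Real.log (n : ℝ) with hx
  have hxnn : 0 ≤ x := Real.log_nonneg hn1
  have hxbig : 2 * (C' + 1) / ε ≤ x := by
    rw [hx, ← Real.log_exp (2 * (C' + 1) / ε)]
    exact Real.log_le_log (Real.exp_pos _) hnexp
  set L1b : ℝ := Real.log (1 - β) with hL1b
  clear_value L1b
  have hlogk1 : L1b + x = Real.log ((1 - β) * (n : ℝ)) := by
    rw [hL1b, hx, ← Real.log_mul (ne_of_gt h1βpos) (ne_of_gt hn0)]
  have hlogk1nn : 0 ≤ L1b + x := by
    rw [hlogk1]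
    exact Real.log_nonneg h1βn1
  have hlogk1le : L1b + x ≤ Real.log ((k : ℝ) + 1) := by
    rw [hlogk1]
    exact Real.log_le_log (by positivity) hklow
  have hLk1nn : 0 ≤ Real.log ((k : ℝ) + 1) := le_trans hlogk1nn hlogk1le
  clear_value β C' s k x
  -- e1
  have e1 : (k : ℝ) * x ≤ (1 - β) * ((n : ℝ) * x) := by
    rw [← mul_assoc]
    exact mul_le_mul_of_nonneg_right hkup hxnn
  -- e2
  have e2 : β * ((n : ℝ) * L1b) + β * ((n : ℝ) * x) ≤ (s : ℝ) * Real.log ((k : ℝ) + 1) := by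
    have h1 : β * ((n : ℝ) * L1b) + β * ((n : ℝ) * x) = (β * (n : ℝ)) * (L1b + x) := by ring
    rw [h1]
    calc (β * (n : ℝ)) * (L1b + x) ≤ (β * (n : ℝ)) * Real.log ((k : ℝ) + 1) :=
          mul_le_mul_of_nonneg_left hlogk1le (by positivity)
      _ ≤ (s : ℝ) * Real.log ((k : ℝ) + 1) := mul_le_mul_of_nonneg_right hsres hLk1nn
  -- e3
  have e3 : Real.log 2 + (n : ℝ) * Real.log 4 - β * ((n : ℝ) * L1b)
      ≤ (ε / 2) * ((n : ℝ) * x) := by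
    have h1 : (n : ℝ) * (2 * (C' + 1) / ε) ≤ (n : ℝ) * x :=
      mul_le_mul_of_nonneg_left hxbig (le_of_lt hn0)
    have h2 : (ε / 2) * ((n : ℝ) * (2 * (C' + 1) / ε)) ≤ (ε / 2) * ((n : ℝ) * x) :=
      mul_le_mul_of_nonneg_left h1 (by positivity)
    have h3 : (ε / 2) * ((n : ℝ) * (2 * (C' + 1) / ε)) = (n : ℝ) * (C' + 1) := by
      field_simp
    have h4 : Real.log 2 ≤ 1 := by
      have := Real.log_le_sub_one_of_pos (by norm_num : (0:ℝ) < 2)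
      linarith
    have h5 : (n : ℝ) * (C' + 1) = (n : ℝ) * Real.log 4 - β * ((n : ℝ) * L1b) + (n : ℝ) := by
      rw [hC']
      ring
    linarith [h2, h3, h4, h5, hn1]
  have e4 : (1 - β) * ((n : ℝ) * x) - β * ((n : ℝ) * x) + (ε / 2) * ((n : ℝ) * x)
      = (-(1 / 3 - ε) * (n : ℝ)) * x := by
    rw [hβ]
    ring
  linarith [e1, e2, e3, e4]
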